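/- Fix an integer m ≥ 2. For coprime integers a, b with 1 ≤ a < b, let Λ(a/b) denote the maximum of |z| over the complex roots z of the digit polynomial D_{a/b}. Then for any two such coprime pairs (a, b) and (c, d): a/b < c/d (as rational numbers) if and only if Λ(a/b) < Λ(c/d). (This is the monotonicity of entropy: Φ(f) < Φ(g) if and only if the stretch factor λ(ψ_f) is less than λ(ψ_g).) -/

import Mathlib

open Polynomial

/-- The `i`-th digit-polynomial coefficient: `m` if there is an integer `k` with
`a*(i-1) ≤ k*b ≤ a*i`, and `m-2` otherwise. -/
noncomputable def digitCoeff (m : ℤ) (a b : ℕ) (i : ℕ) : ℤ :=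
  open Classical in
  if ∃ k : ℤ, (a : ℤ) * ((i : ℤ) - 1) ≤ k * b ∧ k * b ≤ (a : ℤ) * i then m else m - 2

/-- The digit polynomial `D_{a/b}(t) = t^(b+1) + 1 - ∑_{i=1}^{b} c_i t^(b+1-i)`. -/
noncomputable def digitPoly (m : ℤ) (a b : ℕ) : Polynomial ℤ :=
  X ^ (b + 1) + 1 - ∑ i ∈ Finset.Icc 1 b, C (digitCoeff m a b i) * X ^ (b + 1 - i)

/-- `Λ(a/b)`: the maximum modulus of a complex root of the digit polynomial `D_{a/b}`. -/
noncomputable def maxRootModulus (m : ℤ) (a b : ℕ) : ℝ :=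
  sSup {x : ℝ | ∃ z : ℂ, (Polynomial.aeval z) (digitPoly m a b) = 0 ∧ x = ‖z‖}

namespace StretchAux

/-- `⌈k*b/a⌉` as a natural number. -/
def ec (a b k : ℕ) : ℕ := (k * b) ⌈/⌉ a

/-- `⌊k*b/a⌋ + 1` as a natural number. -/
def ef (a b k : ℕ) : ℕ := k * b / a + 1

lemma ec_le_iff {a b k q : ℕ} (ha : 0 < a) : ec a b k ≤ q ↔ k * b ≤ a * q :=
  ceilDiv_le_iff_le_mul ha

lemma le_mul_ec {a b : ℕ} (ha : 0 < a) (k : ℕ) : k * b ≤ a * ec a b k :=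
  (ec_le_iff ha).1 le_rfl

lemma mul_ec_lt {a b : ℕ} (ha : 0 < a) (k : ℕ) : a * ec a b k < k * b + a := by
  rcases Nat.eq_zero_or_pos (ec a b k) with h0 | hpos
  · rw [h0]; omega
  · by_contra h
    push_neg at h
    have hms : a * (ec a b k - 1) = a * ec a b k - a := by
      rw [Nat.mul_sub, mul_one]
    have h2 : k * b ≤ a * (ec a b k - 1) := by omega
    have := (ec_le_iff ha).2 h2
    omega

lemma ec_eq_of_window {a b k q : ℕ} (ha : 0 < a) (h1 : k * b ≤ a * q)
    (h2 : a * q < k * b + a) : ec a b k = q := by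
  refine le_antisymm ((ec_le_iff ha).2 h1) ?_
  by_contra h
  push_neg at h
  obtain ⟨q', rfl⟩ : ∃ q', q = q' + 1 := ⟨q - 1, by omega⟩
  have h3 := (ec_le_iff (a := a) (b := b) (k := k) (q := q') ha).1 (by omega)
  have hexp : a * (q' + 1) = a * q' + a := by ring
  omega

/-- the floor window for `ef` -/
lemma ef_window {a b : ℕ} (ha : 0 < a) (k : ℕ) :
    k * b < a * ef a b k ∧ a * ef a b k ≤ k * b + a := by
  have h1 := Nat.div_add_mod (k * b) a
  have h2 : k * b % a < a := Nat.mod_lt _ ha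
  have h4 : a * ef a b k = a * (k * b / a) + a := by unfold ef; ring
  omega

/-- the ceiling window combined -/
lemma ec_window {a b : ℕ} (ha : 0 < a) (k : ℕ) :
    k * b ≤ a * ec a b k ∧ a * ec a b k < k * b + a :=
  ⟨le_mul_ec ha k, mul_ec_lt ha k⟩

lemma ec_periodic {a b : ℕ} (ha : 0 < a) (k : ℕ) :
    ec a b (k + a) = ec a b k + b := by
  have h1 := ec_window (b := b) ha k
  refine ec_eq_of_window ha ?_ ?_
  · calc (k + a) * b = k * b + a * b := by ring
    _ ≤ a * ec a b k + a * b := by omega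
    _ = a * (ec a b k + b) := by ring
  · calc a * (ec a b k + b) = a * ec a b k + a * b := by ring
    _ < k * b + a + a * b := by omega
    _ = (k + a) * b + a := by ring

lemma ef_periodic {a b : ℕ} (ha : 0 < a) (k : ℕ) :
    ef a b (k + a) = ef a b k + b := by
  unfold ef
  have : (k + a) * b = k * b + a * b := by ring
  rw [this, Nat.add_mul_div_left _ _ ha]
  omega

lemma ec_strict_mono {a b : ℕ} (ha : 0 < a) (hab : a < b) {k k' : ℕ} (h : k < k') :
    ec a b k < ec a b k' := by
  have h1 := mul_ec_lt (b := b) ha k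
  have h2 := le_mul_ec (b := b) ha k'
  have h3 : k * b + b ≤ k' * b := by
    calc k * b + b = (k + 1) * b := by ring
    _ ≤ k' * b := Nat.mul_le_mul_right _ (by omega)
  have : a * ec a b k < a * ec a b k' := by omega
  exact Nat.lt_of_mul_lt_mul_left this

lemma ec_le_b {a b k : ℕ} (ha : 0 < a) (hk : k ≤ a) : ec a b k ≤ b := by
  rw [ec_le_iff ha]
  calc k * b ≤ a * b := Nat.mul_le_mul_right _ hk
  _ = a * b := rfl

lemma two_le_ec {a b k : ℕ} (ha : 0 < a) (hab : a < b) (hk : 1 ≤ k) : 2 ≤ ec a b k := by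
  by_contra h
  push_neg at h
  have : ec a b k ≤ 1 := by omega
  have := (ec_le_iff ha).1 this
  have : b ≤ k * b := Nat.le_mul_of_pos_left _ hk
  omega

lemma le_ec {a b k : ℕ} (ha : 0 < a) (hab : a ≤ b) : k ≤ ec a b k := by
  by_contra h
  push_neg at h
  obtain ⟨k', rfl⟩ : ∃ k', k = k' + 1 := ⟨k - 1, by omega⟩
  have h2 := (ec_le_iff (b := b) (k := k' + 1) (q := k') ha).1 (by omega)
  have h3 : a * (k' + 1) ≤ (k' + 1) * b := by
    rw [mul_comm]; exact Nat.mul_le_mul_left _ hab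
  have e1 : a * (k' + 1) = a * k' + a := by ring
  have e2 : (k' + 1) * b = k' * b + b := by ring
  omega

lemma le_ef {a b k : ℕ} (ha : 0 < a) (hab : a ≤ b) : k + 1 ≤ ef a b k := by
  unfold ef
  have : k ≤ k * b / a := by
    rw [Nat.le_div_iff_mul_le ha]
    calc k * a ≤ k * b := Nat.mul_le_mul_left _ hab
    _ = k * b := rfl
  omega

lemma ec_at_a {a b : ℕ} (ha : 0 < a) : ec a b a = b :=
  ec_eq_of_window ha (by rw [mul_comm]) (by rw [mul_comm]; omega)

lemma ef_at_a {a b : ℕ} (ha : 0 < a) : ef a b a = b + 1 := by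
  unfold ef
  rw [mul_comm, Nat.mul_div_cancel _ ha]

lemma ef_eq_ec {a b k : ℕ} (ha : 0 < a) (hcop : Nat.Coprime a b) (hk : 1 ≤ k) (hk' : k < a) :
    ef a b k = ec a b k := by
  have h1 := ec_window (b := b) ha k
  have h2 := ef_window (b := b) ha k
  have hne : k * b ≠ a * ec a b k := by
    intro h
    have hdvd : a ∣ k * b := ⟨_, h⟩
    have : a ∣ k := (Nat.Coprime.dvd_of_dvd_mul_right hcop hdvd)
    have := Nat.le_of_dvd (by omega) this
    omega
  have hlt : a * ef a b k < a * ec a b k + a := by omega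
  have hgt : a * ec a b k < a * ef a b k + a := by omega
  have e1 : ef a b k < ec a b k + 1 := by
    have : a * ef a b k < a * (ec a b k + 1) := by rw [mul_add, mul_one]; omega
    exact Nat.lt_of_mul_lt_mul_left this
  have e2 : ec a b k < ef a b k + 1 := by
    have : a * ec a b k < a * (ef a b k + 1) := by rw [mul_add, mul_one]; omega
    exact Nat.lt_of_mul_lt_mul_left this
  omega

/-- monotone comparison of ceilings along slopes: if `a*d ≤ c*b` then `⌈kd/c⌉ ≤ ⌈kb/a⌉`. -/
lemma ec_slope_mono {a b c d : ℕ} (ha : 0 < a) (hc : 0 < c) (h : a * d ≤ c * b) (k : ℕ) :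
    ec c d k ≤ ec a b k := by
  rw [ec_le_iff hc]
  have h1 : a * (k * d) ≤ a * (c * ec a b k) := by
    have h2 := le_mul_ec (b := b) ha k
    calc a * (k * d) = k * (a * d) := by ring
    _ ≤ k * (c * b) := Nat.mul_le_mul_left _ h
    _ = c * (k * b) := by ring
    _ ≤ c * (a * ec a b k) := Nat.mul_le_mul_left _ h2
    _ = a * (c * ec a b k) := by ring
  exact Nat.le_of_mul_le_mul_left h1 ha

lemma ef_slope_mono {a b c d : ℕ} (ha : 0 < a) (hc : 0 < c) (h : a * d ≤ c * b) (k : ℕ) :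
    ef c d k ≤ ef a b k := by
  unfold ef
  have hdd : k * d / c ≤ k * b / a := by
    rw [Nat.le_div_iff_mul_le ha]
    have h1 : k * d / c * c ≤ k * d := Nat.div_mul_le_self _ _
    have h2 : (k * d / c * a) * c ≤ (k * b) * c := by
      calc (k * d / c * a) * c = (k * d / c * c) * a := by ring
      _ ≤ (k * d) * a := Nat.mul_le_mul_right _ h1
      _ = (a * d) * k := by ring
      _ ≤ (c * b) * k := Nat.mul_le_mul_right _ h
      _ = (k * b) * c := by ring
    exact Nat.le_of_mul_le_mul_right h2 hc
  omega


lemma ef_mul {a b c : ℕ} (ha : 0 < a) : ef a b (a * c) = c * b + 1 := by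
  unfold ef
  rw [show a * c * b = a * (c * b) by ring, Nat.mul_div_cancel_left _ ha]

section Comb
variable {a b : ℕ} (m : ℤ)

/-- the set of special positions -/
def specials (a b : ℕ) : Finset ℕ := insert 1 ((Finset.Icc 1 a).image (ec a b))

lemma special_iff (ha : 0 < a) (hab : a < b) (hcop : Nat.Coprime a b)
    {i : ℕ} (hi1 : 1 ≤ i) (hib : i ≤ b) :
    (∃ k : ℤ, (a : ℤ) * ((i : ℤ) - 1) ≤ k * b ∧ k * b ≤ (a : ℤ) * i) ↔ i ∈ specials a b := by
  have hb0 : 0 < b := by omega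
  constructor
  · rintro ⟨k, hk1, hk2⟩
    rcases eq_or_lt_of_le hi1 with h1 | h2
    · rw [specials, ← h1]
      exact Finset.mem_insert_self _ _
    · -- i ≥ 2
      obtain ⟨j, rfl⟩ : ∃ j, i = j + 1 := ⟨i - 1, by omega⟩
      have hcast : ((j + 1 : ℕ) : ℤ) - 1 = (j : ℤ) := by push_cast; ring
      rw [hcast] at hk1
      have hk0 : 1 ≤ k := by
        by_contra hk0
        push_neg at hk0
        have hkb : k * (b : ℤ) ≤ 0 :=
          mul_nonpos_of_nonpos_of_nonneg (by omega) (by positivity)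
        have h3 : (a : ℤ) * 1 ≤ (a : ℤ) * j := by
          apply mul_le_mul_of_nonneg_left (by exact_mod_cast (by omega : 1 ≤ j)) (by positivity)
        have ha' : (0 : ℤ) < a := by exact_mod_cast ha
        omega
      have hka : k ≤ a := by
        by_contra hka
        push_neg at hka
        have h3 : ((a : ℤ) + 1) * b ≤ k * b := by
          apply mul_le_mul_of_nonneg_right (by omega) (by positivity)
        have h4 : (a : ℤ) * (j + 1) ≤ (a : ℤ) * b := by
          apply mul_le_mul_of_nonneg_left (by exact_mod_cast hib) (by positivity)
        have hb' : (0 : ℤ) < b := by exact_mod_cast hb0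
        have ha' : (0 : ℤ) ≤ a := by positivity
        nlinarith
      set k' : ℕ := k.toNat with hk'
      have hkk : (k' : ℤ) = k := Int.toNat_of_nonneg (by omega)
      have hwin1 : k' * b ≤ a * (j + 1) := by
        have h5 : ((k' : ℤ)) * b ≤ (a : ℤ) * (j + 1) := by rw [hkk]; push_cast at hk2 ⊢; linarith
        exact_mod_cast h5
      have hwin2' : a * j ≤ k' * b := by
        have h5 : (a : ℤ) * j ≤ ((k' : ℤ)) * b := by rw [hkk]; exact hk1
        exact_mod_cast h5
      have hne : a * j ≠ k' * b := by
        intro heq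
        have hdvd : a ∣ k' * b := ⟨j, heq.symm⟩
        have hdk : a ∣ k' := hcop.dvd_of_dvd_mul_right hdvd
        have hk'1 : 1 ≤ k' := by omega
        have hk'a : k' ≤ a := by omega
        have hka' : k' = a := le_antisymm hk'a (Nat.le_of_dvd (by omega) hdk)
        subst hka'
        have hjb : j = b := Nat.eq_of_mul_eq_mul_left ha (by rw [heq, mul_comm])
        omega
      have hwin2 : a * (j + 1) < k' * b + a := by
        have hexp : a * (j + 1) = a * j + a := by ring
        omega
      have hecl : ec a b k' = j + 1 := ec_eq_of_window ha hwin1 hwin2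
      rw [specials]
      refine Finset.mem_insert_of_mem ?_
      rw [Finset.mem_image]
      exact ⟨k', Finset.mem_Icc.2 ⟨by omega, by omega⟩, hecl⟩
  · intro hmem
    rw [specials] at hmem
    rcases Finset.mem_insert.1 hmem with h1 | h2
    · exact ⟨0, by subst h1; norm_num⟩
    · rw [Finset.mem_image] at h2
      obtain ⟨k, hk, rfl⟩ := h2
      rw [Finset.mem_Icc] at hk
      have h2e : 2 ≤ ec a b k := two_le_ec ha hab hk.1
      obtain ⟨j, hj⟩ : ∃ j, ec a b k = j + 1 := ⟨ec a b k - 1, by omega⟩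
      refine ⟨(k : ℤ), ?_, ?_⟩
      · have h3 : a * ec a b k < k * b + a := mul_ec_lt ha k
        rw [hj] at h3 ⊢
        have hexp : a * (j + 1) = a * j + a := by ring
        have h4 : a * j ≤ k * b := by omega
        have hcast : ((j + 1 : ℕ) : ℤ) - 1 = (j : ℤ) := by push_cast; ring
        rw [hcast]
        exact_mod_cast h4
      · exact_mod_cast le_mul_ec ha k
end Comb

section SumSplit
variable {K : Type*} [Field K] {a b : ℕ} {m : ℤ}

lemma specials_subset (ha : 0 < a) (hab : a < b) : specials a b ⊆ Finset.Icc 1 b := by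
  rw [specials]
  intro i hi
  rcases Finset.mem_insert.1 hi with h1 | h2
  · subst h1; exact Finset.mem_Icc.2 ⟨le_rfl, by omega⟩
  · rw [Finset.mem_image] at h2
    obtain ⟨k, hk, rfl⟩ := h2
    rw [Finset.mem_Icc] at hk
    exact Finset.mem_Icc.2 ⟨by have := two_le_ec ha hab hk.1; omega, ec_le_b ha hk.2⟩

lemma sum_digitCoeff_mul (ha : 0 < a) (hab : a < b) (hcop : Nat.Coprime a b) (w : K) :
    ∑ i ∈ Finset.Icc 1 b, ((digitCoeff m a b i : ℤ) : K) * w ^ i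
      = ((m : K) - 2) * ∑ i ∈ Finset.Icc 1 b, w ^ i
        + 2 * (w + ∑ k ∈ Finset.Icc 1 a, w ^ ec a b k) := by
  classical
  have hterm : ∀ i ∈ Finset.Icc 1 b,
      ((digitCoeff m a b i : ℤ) : K) * w ^ i
        = ((m : K) - 2) * w ^ i + (if i ∈ specials a b then 2 * w ^ i else 0) := by
    intro i hi
    rw [Finset.mem_Icc] at hi
    by_cases hsp : ∃ k : ℤ, (a : ℤ) * ((i : ℤ) - 1) ≤ k * b ∧ k * b ≤ (a : ℤ) * i
    · rw [digitCoeff, if_pos hsp, if_pos ((special_iff ha hab hcop hi.1 hi.2).1 hsp)]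
      push_cast
      ring
    · rw [digitCoeff, if_neg hsp,
        if_neg (fun hmem => hsp ((special_iff ha hab hcop hi.1 hi.2).2 hmem))]
      push_cast
      ring
  rw [Finset.sum_congr rfl hterm, Finset.sum_add_distrib, ← Finset.mul_sum]
  congr 1
  rw [Finset.sum_ite_mem, (Finset.inter_eq_right).2 (specials_subset ha hab)]
  rw [specials, Finset.sum_insert, Finset.sum_image, pow_one]
  · rw [mul_add, Finset.mul_sum]
  · intro x hx y hy hxy
    rw [Finset.coe_Icc, Set.mem_Icc] at hx hy
    by_contra hne
    rcases Nat.lt_or_ge x y with h | h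
    · exact absurd hxy (Nat.ne_of_lt (ec_strict_mono ha hab h))
    · have : y < x := by omega
      exact absurd hxy.symm (Nat.ne_of_lt (ec_strict_mono ha hab this))
  · rw [Finset.mem_image]
    rintro ⟨k, hk, hk1⟩
    rw [Finset.mem_Icc] at hk
    have := two_le_ec ha hab hk.1
    omega

/-- `Qf` : the reversed digit polynomial, `w^(b+1) D(1/w)`. -/
noncomputable def Qf (m : ℤ) (a b : ℕ) {K : Type*} [Field K] (w : K) : K :=
  1 + w ^ (b + 1) - ∑ i ∈ Finset.Icc 1 b, ((digitCoeff m a b i : ℤ) : K) * w ^ i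

lemma Qf_eq_aeval (w : K) (hw : w ≠ 0) :
    Qf m a b w = w ^ (b + 1) * (aeval w⁻¹ (digitPoly m a b)) := by
  rw [digitPoly, map_sub, map_add, map_pow, aeval_X, map_one, map_sum]
  rw [mul_sub, mul_add, mul_one, Finset.mul_sum]
  have hpow : ∀ i ∈ Finset.Icc 1 b,
      w ^ (b + 1) * (aeval w⁻¹ (C (digitCoeff m a b i) * X ^ (b + 1 - i)))
        = ((digitCoeff m a b i : ℤ) : K) * w ^ i := by
    intro i hi
    rw [Finset.mem_Icc] at hi
    rw [map_mul, aeval_C, map_pow, aeval_X]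
    have hsplit : w ^ (b + 1) = w ^ (b + 1 - i) * w ^ i := by
      rw [← pow_add]
      congr 1
      omega
    rw [hsplit, inv_pow]
    field_simp
    exact eq_intCast _ _
  rw [Finset.sum_congr rfl hpow, inv_pow, Qf]
  field_simp
end SumSplit

section Series
variable {K : Type*} [NormedField K] [CompleteSpace K]

/-- summability of `k ↦ w^(e (k+1))` when the exponents grow at least linearly. -/
lemma summable_pow_exp {w : K} (hw : ‖w‖ < 1) (e : ℕ → ℕ) (hgrow : ∀ k, k ≤ e k) :
    Summable (fun k : ℕ => w ^ e (k + 1)) := by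
  apply Summable.of_norm_bounded (g := fun k => ‖w‖ ^ k)
    (summable_geometric_of_lt_one (norm_nonneg w) hw)
  intro k
  rw [norm_pow]
  exact pow_le_pow_of_le_one (norm_nonneg w) hw.le (le_trans (Nat.le_succ k) (hgrow (k + 1)))

/-- Evaluation of the periodic-exponent geometric series. -/
lemma tsum_pow_exp_mul {w : K} (hw : ‖w‖ < 1) {a b : ℕ} (ha : 0 < a) (hb : 0 < b)
    (e : ℕ → ℕ) (hgrow : ∀ k, k ≤ e k) (hper : ∀ k, e (k + a) = e k + b) :
    (∑' k : ℕ, w ^ e (k + 1)) * (1 - w ^ b) = ∑ k ∈ Finset.Icc 1 a, w ^ e k := by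
  haveI : NeZero a := ⟨ha.ne'⟩
  have hwb : ‖w ^ b‖ < 1 := by
    rw [norm_pow]
    exact pow_lt_one₀ (norm_nonneg w) hw hb.ne'
  have hpermul : ∀ r q : ℕ, e (r + q * a) = e r + q * b := by
    intro r q
    induction q with
    | zero => simp
    | succ n ih =>
        have : r + (n + 1) * a = (r + n * a) + a := by ring
        rw [this, hper, ih]
        ring
  have hsum := summable_pow_exp hw e hgrow
  -- reindex by div/mod
  have h1 : (∑' k : ℕ, w ^ e (k + 1))
      = ∑' p : ℕ × Fin a, w ^ e ((p.1 * a + (p.2 : ℕ)) + 1) := by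
    rw [← Equiv.tsum_eq (Nat.divModEquiv a).symm (fun k => w ^ e (k + 1))]
    rfl
  rw [h1]
  have hsum2 : Summable (fun p : ℕ × Fin a => w ^ e ((p.1 * a + (p.2 : ℕ)) + 1)) := by
    have := ((Nat.divModEquiv a).symm.summable_iff
      (f := fun k : ℕ => w ^ e (k + 1))).2 hsum
    exact this
  rw [Summable.tsum_prod' hsum2 (fun q => Summable.of_finite)]
  have h2 : ∀ q : ℕ, ∑' r : Fin a, w ^ e ((q * a + (r : ℕ)) + 1)
      = (∑ k ∈ Finset.Icc 1 a, w ^ e k) * (w ^ b) ^ q := by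
    intro q
    rw [tsum_fintype]
    have hterm : ∀ r : Fin a, w ^ e ((q * a + (r : ℕ)) + 1) = w ^ e ((r : ℕ) + 1) * (w ^ b) ^ q := by
      intro r
      have harg : (q * a + (r : ℕ)) + 1 = ((r : ℕ) + 1) + q * a := by ring
      rw [harg, hpermul, pow_add, ← pow_mul, mul_comm q b]
    rw [Finset.sum_congr rfl (fun r _ => hterm r), ← Finset.sum_mul]
    congr 1
    rw [Fin.sum_univ_eq_sum_range (fun r => w ^ e (r + 1)) a]
    rw [← Finset.Ico_add_one_right_eq_Icc, Finset.sum_Ico_eq_sum_range]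
    have hr : a + 1 - 1 = a := by omega
    rw [hr]
    exact Finset.sum_congr rfl (fun i _ => by rw [Nat.add_comm 1 i])
  rw [tsum_congr h2, tsum_mul_left, tsum_geometric_of_norm_lt_one hwb]
  have hne : (1 : K) - w ^ b ≠ 0 := by
    intro h
    have : w ^ b = 1 := by linear_combination -h
    rw [this, norm_one] at hwb
    exact absurd hwb (lt_irrefl _)
  field_simp

end Series

/-- The master series function `G`. -/
noncomputable def Gfun (m : ℤ) (a b : ℕ) {K : Type*} [NormedField K] [CompleteSpace K]
    (w : K) : K :=
  ((m : K) - 2) * (w * (1 - w)⁻¹) + 2 * w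
    + ∑' k : ℕ, (w ^ ec a b (k + 1) + w ^ ef a b (k + 1))

section Identity
variable {K : Type*} [NormedField K] [CompleteSpace K] {a b : ℕ} {m : ℤ}

lemma sum_Icc_pow_eq (w : K) (hw1 : w ≠ 1) (b : ℕ) :
    ∑ i ∈ Finset.Icc 1 b, w ^ i = w * (1 - w ^ b) * (1 - w)⁻¹ := by
  have h1 : ∑ i ∈ Finset.Icc 1 b, w ^ i = w * ∑ i ∈ Finset.range b, w ^ i := by
    rw [← Finset.Ico_add_one_right_eq_Icc, Finset.sum_Ico_eq_sum_range]
    have hr : b + 1 - 1 = b := by omega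
    rw [hr, Finset.mul_sum]
    exact Finset.sum_congr rfl (fun i _ => by rw [Nat.add_comm 1 i, pow_add, pow_one, mul_comm])
  rw [h1, geom_sum_eq hw1]
  have hne : w - 1 ≠ 0 := sub_ne_zero.2 hw1
  have hne' : (1 : K) - w ≠ 0 := fun h => hne (by linear_combination -h)
  field_simp
  ring

lemma Qf_identity (ha : 0 < a) (hab : a < b) (hcop : Nat.Coprime a b)
    {w : K} (hw : ‖w‖ < 1) :
    Qf m a b w = (1 - w ^ b) * (1 - Gfun m a b w) := by
  have hb : 0 < b := by omega
  have hw1 : w ≠ 1 := fun h => by rw [h, norm_one] at hw; exact lt_irrefl _ hw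
  have hwb1 : (1 : K) - w ^ b ≠ 0 := by
    intro h
    have hwb : w ^ b = 1 := by linear_combination -h
    have : ‖w ^ b‖ < 1 := by
      rw [norm_pow]; exact pow_lt_one₀ (norm_nonneg w) hw hb.ne'
    rw [hwb, norm_one] at this
    exact lt_irrefl _ this
  have hw1' : (1 : K) - w ≠ 0 := fun h => hw1 (by linear_combination -h)
  have hgc : ∀ k, k ≤ ec a b k := fun k => le_ec ha hab.le
  have hgf : ∀ k, k ≤ ef a b k := fun k => le_trans (Nat.le_succ k) (le_ef ha hab.le)
  have hsc : Summable (fun k : ℕ => w ^ ec a b (k + 1)) := summable_pow_exp hw _ hgc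
  have hsf : Summable (fun k : ℕ => w ^ ef a b (k + 1)) := summable_pow_exp hw _ hgf
  have hc := tsum_pow_exp_mul hw ha hb (ec a b) hgc (ec_periodic ha)
  have hf := tsum_pow_exp_mul hw ha hb (ef a b) hgf (ef_periodic ha)
  -- the finite ef-sum in terms of the ec-sum
  have hef_sum : ∑ k ∈ Finset.Icc 1 a, w ^ ef a b k
      = ∑ k ∈ Finset.Icc 1 a, w ^ ec a b k - w ^ b + w ^ (b + 1) := by
    obtain ⟨a', rfl⟩ : ∃ a', a = a' + 1 := ⟨a - 1, by omega⟩
    have hsplit : ∀ g : ℕ → K, ∑ k ∈ Finset.Icc 1 (a' + 1), g k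
        = ∑ k ∈ Finset.Icc 1 a', g k + g (a' + 1) := by
      intro g
      rw [← Finset.Ico_add_one_right_eq_Icc, ← Finset.Ico_add_one_right_eq_Icc,
        Finset.sum_Ico_succ_top (by omega : 1 ≤ a' + 1)]
    rw [hsplit (fun k => w ^ ef (a' + 1) b k), hsplit (fun k => w ^ ec (a' + 1) b k)]
    have h2 : ∑ k ∈ Finset.Icc 1 a', w ^ ef (a' + 1) b k
        = ∑ k ∈ Finset.Icc 1 a', w ^ ec (a' + 1) b k := by
      refine Finset.sum_congr rfl (fun k hk => ?_)
      rw [Finset.mem_Icc] at hk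
      rw [ef_eq_ec ha hcop hk.1 (by omega)]
    rw [h2, ef_at_a ha, ec_at_a ha]
    ring
  rw [Qf, sum_digitCoeff_mul ha hab hcop w, Gfun, Summable.tsum_add hsc hsf]
  have e1 : ∑' k : ℕ, w ^ ec a b (k + 1)
      = (∑ k ∈ Finset.Icc 1 a, w ^ ec a b k) * (1 - w ^ b)⁻¹ := by
    rw [← hc]; field_simp
  have e2 : ∑' k : ℕ, w ^ ef a b (k + 1)
      = (∑ k ∈ Finset.Icc 1 a, w ^ ec a b k - w ^ b + w ^ (b + 1)) * (1 - w ^ b)⁻¹ := by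
    rw [← hef_sum, ← hf]; field_simp
  rw [e1, e2, sum_Icc_pow_eq w hw1 b]
  field_simp
  ring

end Identity

section RealLayer
variable {a b c d : ℕ} {m : ℤ}

lemma summable_two_exp {x : ℝ} (h0 : 0 ≤ x) (h1 : x < 1) (ha : 0 < a) (hab : a ≤ b) :
    Summable (fun k : ℕ => x ^ ec a b (k + 1) + x ^ ef a b (k + 1)) := by
  have hn : ‖x‖ < 1 := by rwa [Real.norm_eq_abs, abs_of_nonneg h0]
  exact (summable_pow_exp hn _ (fun k => le_ec ha hab)).add
    (summable_pow_exp hn _ (fun k => le_trans (Nat.le_succ k) (le_ef ha hab)))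

/-- strict monotonicity of `G` in the variable. -/
lemma Gfun_mono_x (hm : 2 ≤ m) (ha : 0 < a) (hab : a < b) {x y : ℝ}
    (hx : 0 ≤ x) (hxy : x < y) (hy : y < 1) : Gfun m a b x < Gfun m a b y := by
  have hy0 : 0 ≤ y := le_trans hx hxy.le
  have hm0 : (0 : ℝ) ≤ (m : ℝ) - 2 := by
    have : (2 : ℝ) ≤ (m : ℝ) := by exact_mod_cast hm
    linarith
  rw [Gfun, Gfun]
  have t1 : ((m : ℝ) - 2) * (x * (1 - x)⁻¹) ≤ ((m : ℝ) - 2) * (y * (1 - y)⁻¹) := by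
    apply mul_le_mul_of_nonneg_left ?_ hm0
    rw [← div_eq_mul_inv, ← div_eq_mul_inv]
    rw [div_le_div_iff₀ (by linarith) (by linarith)]
    nlinarith
  have t2 : 2 * x < 2 * y := by linarith
  have t3 : (∑' k : ℕ, (x ^ ec a b (k + 1) + x ^ ef a b (k + 1)))
      ≤ ∑' k : ℕ, (y ^ ec a b (k + 1) + y ^ ef a b (k + 1)) := by
    apply Summable.tsum_le_tsum ?_ (summable_two_exp hx (lt_trans hxy hy) ha hab.le)
      (summable_two_exp hy0 hy ha hab.le)
    intro k
    exact add_le_add (pow_le_pow_left₀ hx hxy.le _) (pow_le_pow_left₀ hx hxy.le _)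
  linarith

/-- strict monotonicity of `G` in the slope `a/b`. -/
lemma Gfun_mono_slope (hm : 2 ≤ m) (ha : 0 < a) (hab : a < b) (hc : 0 < c) (hcd : c < d)
    (hlt : a * d < c * b) {x : ℝ} (hx : 0 < x) (hx1 : x < 1) :
    Gfun m a b x < Gfun m c d x := by
  rw [Gfun, Gfun]
  have key : (∑' k : ℕ, (x ^ ec a b (k + 1) + x ^ ef a b (k + 1)))
      < ∑' k : ℕ, (x ^ ec c d (k + 1) + x ^ ef c d (k + 1)) := by
    apply Summable.tsum_lt_tsum_of_nonneg (i := a * c - 1)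
    · intro k
      positivity
    · intro k
      exact add_le_add
        (pow_le_pow_of_le_one hx.le hx1.le (ec_slope_mono ha hc hlt.le (k + 1)))
        (pow_le_pow_of_le_one hx.le hx1.le (ef_slope_mono ha hc hlt.le (k + 1)))
    · have hac : a * c - 1 + 1 = a * c := by
        have : 0 < a * c := Nat.mul_pos ha hc
        omega
      rw [hac, ef_mul ha, mul_comm a c, ef_mul hc, mul_comm c a]
      apply add_lt_add_of_le_of_lt
      · exact pow_le_pow_of_le_one hx.le hx1.le (ec_slope_mono ha hc hlt.le _)
      · exact pow_lt_pow_right_of_lt_one₀ hx hx1 (by omega)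
    · exact summable_two_exp hx.le hx1 hc hcd.le
  have hm0 : (0 : ℝ) ≤ (m : ℝ) - 2 := by
    have : (2 : ℝ) ≤ (m : ℝ) := by exact_mod_cast hm
    linarith
  linarith

/-- the complex norm bound for `G`. -/
lemma norm_Gfun_le (hm : 2 ≤ m) (ha : 0 < a) (hab : a < b) {w : ℂ} (hw : ‖w‖ < 1) :
    ‖Gfun m a b w‖ ≤ Gfun m a b (‖w‖ : ℝ) := by
  have hwn : ‖(‖w‖ : ℝ)‖ < 1 := by rwa [Real.norm_eq_abs, abs_of_nonneg (norm_nonneg w)]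
  have hm0 : (0 : ℝ) ≤ (m : ℝ) - 2 := by
    have : (2 : ℝ) ≤ (m : ℝ) := by exact_mod_cast hm
    linarith
  have hsc := summable_pow_exp hw (ec a b) (fun k => le_ec ha hab.le)
  have hsf := summable_pow_exp hw (ef a b) (fun k => le_trans (Nat.le_succ k) (le_ef ha hab.le))
  have hscn := summable_pow_exp hwn (ec a b) (fun k => le_ec ha hab.le)
  have hsfn := summable_pow_exp hwn (ef a b) (fun k => le_trans (Nat.le_succ k) (le_ef ha hab.le))
  rw [Gfun, Gfun]
  refine le_trans (norm_add_le _ _) (add_le_add (le_trans (norm_add_le _ _) (add_le_add ?_ ?_)) ?_)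
  · -- first term
    rw [norm_mul, norm_mul, norm_inv]
    have h1 : ‖((m : ℂ) - 2)‖ = (m : ℝ) - 2 := by
      have hc : ((m : ℂ) - 2) = (((m : ℝ) - 2 : ℝ) : ℂ) := by push_cast; ring
      rw [hc, Complex.norm_real, Real.norm_eq_abs, abs_of_nonneg hm0]
    rw [h1]
    apply mul_le_mul_of_nonneg_left ?_ hm0
    apply mul_le_mul_of_nonneg_left ?_ (norm_nonneg w)
    have h2 : 1 - ‖w‖ ≤ ‖1 - w‖ := by
      have := norm_sub_norm_le (1 : ℂ) w
      rwa [norm_one] at this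
    have h3 : (0 : ℝ) < 1 - ‖w‖ := by linarith
    exact inv_anti₀ h3 h2
  · rw [norm_mul]
    simp
  · refine le_trans (norm_tsum_le_tsum_norm ((hsc.add hsf).norm)) ?_
    apply Summable.tsum_le_tsum ?_ ((hsc.add hsf).norm) (hscn.add hsfn)
    intro k
    refine le_trans (norm_add_le _ _) ?_
    rw [norm_pow, norm_pow]

lemma aeval_zero_digitPoly : (aeval (0 : ℂ)) (digitPoly m a b) = 1 := by
  rw [digitPoly, map_sub, map_add, map_pow, aeval_X, map_one, map_sum]
  rw [zero_pow (by omega : b + 1 ≠ 0)]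
  have hz : ∀ i ∈ Finset.Icc 1 b, (aeval (0 : ℂ)) (C (digitCoeff m a b i) * X ^ (b + 1 - i)) = 0 := by
    intro i hi
    rw [Finset.mem_Icc] at hi
    rw [map_mul, map_pow, aeval_X, zero_pow (by omega : b + 1 - i ≠ 0), mul_zero]
  rw [Finset.sum_congr rfl hz, Finset.sum_const_zero]
  ring

lemma Qf_real_complex (x : ℝ) : (Qf m a b (x : ℂ)) = ((Qf m a b x : ℝ) : ℂ) := by
  rw [Qf, Qf]
  push_cast [Complex.ofReal_sum]
  norm_num

lemma Qf_zero : Qf m a b (0 : ℝ) = 1 := by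
  rw [Qf]
  rw [zero_pow (by omega : b + 1 ≠ 0)]
  have hz : ∀ i ∈ Finset.Icc 1 b, ((digitCoeff m a b i : ℤ) : ℝ) * (0 : ℝ) ^ i = 0 := by
    intro i hi
    rw [Finset.mem_Icc] at hi
    rw [zero_pow (by omega : i ≠ 0), mul_zero]
  rw [Finset.sum_congr rfl hz, Finset.sum_const_zero]
  ring

lemma Qf_one (hm : 2 ≤ m) (ha : 0 < a) (hab : a < b) (hcop : Nat.Coprime a b) :
    Qf m a b (1 : ℝ) < 0 := by
  rw [Qf, sum_digitCoeff_mul ha hab hcop (1 : ℝ)]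
  simp only [one_pow, mul_one, Finset.sum_const, Nat.card_Icc, nsmul_eq_mul]
  have e1 : (↑(b + 1 - 1) : ℝ) = (b : ℝ) := by
    push_cast [Nat.add_sub_cancel]
    norm_num
  have e2 : (↑(a + 1 - 1) : ℝ) = (a : ℝ) := by
    push_cast [Nat.add_sub_cancel]
    norm_num
  rw [e1, e2]
  have hm2 : (2 : ℝ) ≤ (m : ℝ) := by exact_mod_cast hm
  have hb2 : (1 : ℝ) ≤ (b : ℝ) := by exact_mod_cast (by omega : 1 ≤ b)
  have ha2 : (1 : ℝ) ≤ (a : ℝ) := by exact_mod_cast ha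
  nlinarith

/-- The central structural result: `maxRootModulus = x⁻¹` for the unique `x ∈ (0,1)`
with `G(x) = 1`. -/
lemma maxRoot_eq (hm : 2 ≤ m) (ha : 0 < a) (hab : a < b) (hcop : Nat.Coprime a b) :
    ∃ x : ℝ, 0 < x ∧ x < 1 ∧ Gfun m a b x = 1 ∧ maxRootModulus m a b = x⁻¹ := by
  -- IVT for the real polynomial Qf
  have hcont : ContinuousOn (fun x : ℝ => Qf m a b x) (Set.Icc 0 1) := by
    apply Continuous.continuousOn
    unfold Qf
    apply Continuous.sub
    · exact continuous_const.add (continuous_pow _)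
    · exact continuous_finset_sum _ (fun i _ => continuous_const.mul (continuous_pow i))
  have hIVT := intermediate_value_Ioo' (by norm_num : (0:ℝ) ≤ 1) hcont
  have h0mem : (0 : ℝ) ∈ Set.Ioo (Qf m a b (1:ℝ)) (Qf m a b (0:ℝ)) := by
    constructor
    · exact Qf_one hm ha hab hcop
    · rw [Qf_zero]; norm_num
  obtain ⟨x, hx, hQx⟩ := hIVT h0mem
  obtain ⟨hx0, hx1⟩ := hx
  have hxn : ‖x‖ < 1 := by rwa [Real.norm_eq_abs, abs_of_pos hx0]
  -- G(x) = 1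
  have hQx' : Qf m a b x = 0 := hQx
  have hid := Qf_identity (K := ℝ) (m := m) ha hab hcop hxn
  rw [hQx'] at hid
  have hxb : x ^ b < 1 := pow_lt_one₀ hx0.le hx1 (by omega)
  have hGx : Gfun m a b x = 1 := by
    have h2 : (1 : ℝ) - x ^ b ≠ 0 := by linarith
    have := mul_eq_zero.1 hid.symm
    rcases this with h | h
    · exact absurd h h2
    · linarith [h]
  refine ⟨x, hx0, hx1, hGx, ?_⟩
  -- the root z = (x : ℂ)⁻¹
  have hxC : ((x : ℂ)) ≠ 0 := by exact_mod_cast hx0.ne'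
  have hroot : (aeval ((x : ℂ))⁻¹) (digitPoly m a b) = 0 := by
    have hq : Qf m a b ((x : ℂ)) = 0 := by
      rw [Qf_real_complex, hQx']
      norm_num
    rw [Qf_eq_aeval _ hxC] at hq
    rcases mul_eq_zero.1 hq with h | h
    · exact absurd h (pow_ne_zero _ hxC)
    · exact h
  have habs : ‖((x : ℂ))⁻¹‖ = x⁻¹ := by
    rw [norm_inv, Complex.norm_real, Real.norm_eq_abs, abs_of_pos hx0]
  -- upper bound for all roots
  have hbound : ∀ y ∈ {y : ℝ | ∃ z : ℂ, (aeval z) (digitPoly m a b) = 0 ∧ y = ‖z‖},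
      y ≤ x⁻¹ := by
    rintro y ⟨z, hz, rfl⟩
    have hz0 : z ≠ 0 := by
      intro h
      rw [h, aeval_zero_digitPoly] at hz
      exact one_ne_zero hz
    set w : ℂ := z⁻¹ with hwdef
    have hw0 : w ≠ 0 := inv_ne_zero hz0
    have hQw : Qf m a b w = 0 := by
      rw [Qf_eq_aeval _ hw0, hwdef, inv_inv, hz, mul_zero]
    rcases le_or_gt 1 ‖w‖ with h1 | h1
    · -- |z| ≤ 1 < x⁻¹
      have hz1 : ‖z‖ ≤ 1 := by
        have : ‖z‖ = ‖w‖⁻¹ := by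
          rw [hwdef, norm_inv, inv_inv]
        rw [this]
        exact inv_le_one_of_one_le₀ h1
      have : (1 : ℝ) < x⁻¹ := by
        rw [lt_inv_comm₀ (by norm_num) hx0]
        simpa using hx1
      linarith
    · -- |w| < 1 : use the identity and the norm bound
      have hidw := Qf_identity (K := ℂ) (m := m) ha hab hcop h1
      rw [hQw] at hidw
      have hwb : (1 : ℂ) - w ^ b ≠ 0 := by
        intro h
        have hb1 : w ^ b = 1 := by linear_combination -h
        have : ‖w ^ b‖ < 1 := by
          rw [norm_pow]
          exact pow_lt_one₀ (norm_nonneg w) h1 (by omega)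
        rw [hb1, norm_one] at this
        exact lt_irrefl _ this
      have hGw : Gfun m a b w = 1 := by
        rcases mul_eq_zero.1 hidw.symm with h | h
        · exact absurd h hwb
        · linear_combination -h
      have hnormG : (1 : ℝ) ≤ Gfun m a b (‖w‖ : ℝ) := by
        calc (1 : ℝ) = ‖Gfun m a b w‖ := by rw [hGw, norm_one]
        _ ≤ Gfun m a b (‖w‖ : ℝ) := norm_Gfun_le hm ha hab h1
      have hxw : x ≤ ‖w‖ := by
        by_contra hcon
        push_neg at hcon
        have := Gfun_mono_x (a := a) (b := b) hm ha hab (norm_nonneg w) hcon hx1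
        rw [hGx] at this
        linarith
      have habsz : ‖z‖ = ‖w‖⁻¹ := by
        rw [hwdef, norm_inv, inv_inv]
      rw [habsz]
      exact inv_anti₀ hx0 hxw
  -- conclude the sSup computation
  rw [maxRootModulus]
  apply le_antisymm
  · exact Real.sSup_le hbound (by positivity)
  · apply le_csSup ⟨x⁻¹, hbound⟩
    exact ⟨((x : ℂ))⁻¹, hroot, habs.symm⟩

end RealLayer

end StretchAux

open StretchAux in
/-- Monotonicity of entropy: for coprime fractions `a/b, c/d ∈ (0,1)`,
`a/b < c/d` iff the maximal root modulus (stretch factor) of `D_{a/b}` is smaller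
than that of `D_{c/d}`. -/
theorem stretch_factor_monotone (m : ℤ) (hm : 2 ≤ m)
    (a b c d : ℕ) (ha : 1 ≤ a) (hab : a < b) (hcop₁ : Nat.Coprime a b)
    (hc : 1 ≤ c) (hcd : c < d) (hcop₂ : Nat.Coprime c d) :
    (a : ℚ) / b < (c : ℚ) / d ↔ maxRootModulus m a b < maxRootModulus m c d := by
  have key : ∀ a b c d : ℕ, 1 ≤ a → a < b → Nat.Coprime a b → 1 ≤ c → c < d →
      Nat.Coprime c d → a * d < c * b → maxRootModulus m a b < maxRootModulus m c d := by
    intro a b c d ha hab hcop hc hcd hcop' hlt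
    obtain ⟨x₁, hx₁0, hx₁1, hG₁, hM₁⟩ := maxRoot_eq hm ha hab hcop
    obtain ⟨x₂, hx₂0, hx₂1, hG₂, hM₂⟩ := maxRoot_eq hm hc hcd hcop'
    have hxx : x₂ < x₁ := by
      by_contra hcon
      push_neg at hcon
      rcases eq_or_lt_of_le hcon with he | hl
      · have hsl := Gfun_mono_slope hm ha hab hc hcd hlt hx₁0 hx₁1
        rw [hG₁, he, hG₂] at hsl
        exact lt_irrefl _ hsl
      · have h1 := Gfun_mono_x (a := a) (b := b) (m := m) hm ha hab hx₁0.le hl hx₂1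
        have h2 := Gfun_mono_slope hm ha hab hc hcd hlt hx₂0 hx₂1
        rw [hG₁] at h1
        rw [hG₂] at h2
        linarith
    rw [hM₁, hM₂]
    exact inv_strictAnti₀ hx₂0 hxx
  have hq : ((a : ℚ) / b < (c : ℚ) / d) ↔ a * d < c * b := by
    rw [div_lt_div_iff₀ (by exact_mod_cast (by omega : 0 < b)) (by exact_mod_cast (by omega : 0 < d))]
    constructor
    · intro h; exact_mod_cast h
    · intro h; exact_mod_cast h
  rw [hq]
  constructor
  · exact fun h => key a b c d ha hab hcop₁ hc hcd hcop₂ h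
  · intro h
    rcases lt_trichotomy (a * d) (c * b) with hl | he | hg
    · exact hl
    · exfalso
      have hac : a = c := by
        have h1 : a ∣ c * b := ⟨d, he.symm⟩
        have h2 : a ∣ c := hcop₁.dvd_of_dvd_mul_right h1
        have h3 : c ∣ a * d := ⟨b, by omega⟩
        have h4 : c ∣ a := hcop₂.dvd_of_dvd_mul_right h3
        exact Nat.dvd_antisymm h2 h4
      subst hac
      have hbd : d = b := by
        have := Nat.eq_of_mul_eq_mul_left (show 0 < a by omega) he
        omega
      subst hbd
      exact lt_irrefl _ h
    · have := key c d a b hc hcd hcop₂ ha hab hcop₁ hg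
      exact absurd h (lt_asymm this)
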